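/- If A, B, X are sums of cycles with AX = B and A, B nonempty, then |A| divides |B|, |X| = |B|/|A|, and every element of L(X) divides some element of L(B). -/

import Mathlib

/-- A sum of cycles has all cycle lengths positive. -/
def Pos (A : ℕ →₀ ℕ) : Prop := ∀ a ∈ A.support, 0 < a

/-- The single cycle of length `n`. -/
noncomputable def Cyc (n : ℕ) : ℕ →₀ ℕ := Finsupp.single n 1

/-- Product of sums of cycles: `C_a · C_x = gcd(a,x) C_{lcm(a,x)}`, extended by distributivity. -/
noncomputable def cmul (A X : ℕ →₀ ℕ) : ℕ →₀ ℕ :=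
  A.sum fun a m => X.sum fun x n => (m * n * Nat.gcd a x) • Finsupp.single (Nat.lcm a x) 1

/-- Number of vertices of a sum of cycles. -/
def size (A : ℕ →₀ ℕ) : ℕ := A.sum fun ℓ m => ℓ * m

/-- The support `L(A,B)` of an instance. -/
def instSupp (A B : ℕ →₀ ℕ) : Set ℕ :=
  {x | 0 < x ∧ x ≤ size B / size A ∧ ∀ a ∈ A.support, Nat.lcm a x ∈ B.support}

/-- Consistency: `L(A) ∨ L(A,B) = L(B)`. -/
def Consistent (A B : ℕ →₀ ℕ) : Prop :=
  {ℓ | ∃ a ∈ A.support, ∃ x ∈ instSupp A B, Nat.lcm a x = ℓ} = ↑B.support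

/-- Cycle length multiplication `A ⊗ p`. -/
noncomputable def otimes (A : ℕ →₀ ℕ) (p : ℕ) : ℕ →₀ ℕ :=
  A.mapDomain (fun a => p * a)

/-- Cycle length division `A ⊘ p`: `(A ⊘ p)(a) = A (p*a)`. -/
noncomputable def oslash (A : ℕ →₀ ℕ) (p : ℕ) : ℕ →₀ ℕ :=
  if hp : p = 0 then 0 else
    Finsupp.comapDomain (fun a => p * a) A ((mul_right_injective₀ hp).injOn)

/-- Contraction `A ⊟ p`: each cycle of length `p*a` becomes `p` cycles of length `a`. -/
noncomputable def contract (A : ℕ →₀ ℕ) (p : ℕ) : ℕ →₀ ℕ :=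
  A.filter (fun a => ¬ p ∣ a) + p • oslash A p

/-- `size` as an additive monoid hom. -/
noncomputable def sizeHom : (ℕ →₀ ℕ) →+ ℕ :=
  Finsupp.liftAddHom fun ℓ => AddMonoidHom.mulLeft ℓ

lemma sizeHom_apply (f : ℕ →₀ ℕ) : sizeHom f = size f := by
  simp [sizeHom, size, Finsupp.liftAddHom_apply, AddMonoidHom.mulLeft]

lemma size_smul_single (k l : ℕ) : size (k • Finsupp.single l 1) = l * k := by
  simp [size, Finsupp.smul_single, Finsupp.sum_single_index]

lemma size_cmul (A X : ℕ →₀ ℕ) : size (cmul A X) = size A * size X := by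
  rw [← sizeHom_apply, cmul, map_finsuppSum]
  have : ∀ a m, sizeHom (X.sum fun x n => (m * n * Nat.gcd a x) • Finsupp.single (Nat.lcm a x) 1)
      = X.sum fun x n => a * m * (x * n) := by
    intro a m
    rw [map_finsuppSum]
    refine Finsupp.sum_congr fun x _ => ?_
    rw [sizeHom_apply, size_smul_single]
    have := Nat.gcd_mul_lcm a x
    calc Nat.lcm a x * (m * X x * Nat.gcd a x)
        = (Nat.gcd a x * Nat.lcm a x) * (m * X x) := by ring
      _ = a * m * (x * X x) := by rw [this]; ring
  calc (A.sum fun a m => sizeHom (X.sum fun x n => (m * n * Nat.gcd a x) • Finsupp.single (Nat.lcm a x) 1))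
      = A.sum fun a m => X.sum fun x n => a * m * (x * n) := Finsupp.sum_congr fun a _ => this a _
    _ = size A * size X := by
        rw [size, size, Finsupp.sum_mul]
        refine Finsupp.sum_congr fun a _ => ?_
        rw [Finsupp.mul_sum]
  -- done

lemma size_pos (A : ℕ →₀ ℕ) (hA : Pos A) (hAne : A ≠ 0) : 0 < size A := by
  obtain ⟨a, ha⟩ := Finsupp.support_nonempty_iff.2 hAne
  have h1 : 0 < a * A a := Nat.mul_pos (hA a ha) (Finsupp.mem_support_iff.1 ha |>.lt_of_le' (Nat.zero_le _))
  calc 0 < a * A a := h1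
    _ ≤ size A := Finset.single_le_sum (f := fun i => i * A i) (fun i _ => Nat.zero_le _) ha

theorem div_of_cmul_eq (A B X : ℕ →₀ ℕ) (hA : Pos A) (hB : Pos B) (hX : Pos X)
    (hAne : A ≠ 0) (hBne : B ≠ 0) (h : cmul A X = B) :
    size A ∣ size B ∧ size X = size B / size A ∧
      ∀ x ∈ X.support, ∃ b ∈ B.support, x ∣ b := by
  have hsz : size B = size A * size X := by rw [← h, size_cmul]
  have hApos := size_pos A hA hAne
  refine ⟨⟨size X, hsz⟩, ?_, ?_⟩
  · rw [hsz, Nat.mul_div_cancel_left _ hApos]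
  · intro x hx
    obtain ⟨a, ha⟩ := Finsupp.support_nonempty_iff.2 hAne
    refine ⟨Nat.lcm a x, ?_, Nat.dvd_lcm_right a x⟩
    rw [← h, Finsupp.mem_support_iff]
    have key : 0 < cmul A X (Nat.lcm a x) := by
      rw [cmul, Finsupp.sum_apply]
      refine Finset.sum_pos' (fun i _ => Nat.zero_le _) ⟨a, ha, ?_⟩
      beta_reduce
      rw [Finsupp.sum_apply]
      refine Finset.sum_pos' (fun i _ => Nat.zero_le _) ⟨x, hx, ?_⟩
      have hgcd : 0 < Nat.gcd a x := Nat.gcd_pos_of_pos_left x (hA a ha)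
      simp [Finsupp.smul_single, Finsupp.single_apply]
      exact ⟨⟨Finsupp.mem_support_iff.1 ha |>.lt_of_le' (Nat.zero_le _),
        Finsupp.mem_support_iff.1 hx |>.lt_of_le' (Nat.zero_le _)⟩, Or.inl (hA a ha)⟩
    omega
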